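/- arXiv:0911.0534 — 2 statements merged into one kernel-verified Lean document; each statement's English description precedes it below -/
import Mathlib

section
/- If p_{σ,n} ∈ P_n^σ, then for |z| = r < 1: Re p_{σ,n}(z) ≥ 1 + 2 Σ_{k=1}^∞ [(σ-(n-1))_n/(σ+k-(n-1))_n] (-r)^k. -/
open Complex MeasureTheory

/-- The Carathéodory class `P`: analytic on the unit disk, value `1` at `0`,
positive real part. -/
def IsCara (p : ℂ → ℂ) : Prop :=
  DifferentiableOn ℂ p (Metric.ball 0 1) ∧ p 0 = 1 ∧
    ∀ z ∈ Metric.ball (0 : ℂ) 1, 0 < (p z).re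

/-- The σ-nth integral iterate (averaged form after substituting `t = s z`):
`p_{σ,n}(z) = (σ-(n-1)) ∫_0^1 s^(σ-n) p_{σ,n-1}(s z) ds`. -/
noncomputable def sigmaIter (σ : ℝ) : ℕ → (ℂ → ℂ) → (ℂ → ℂ)
  | 0, p => p
  | (n + 1), p => fun z =>
      ((σ - (n : ℝ)) : ℂ) *
        ∫ s in (0 : ℝ)..1, ((s ^ (σ - ((n : ℝ) + 1)) : ℝ) : ℂ) * sigmaIter σ n p ((s : ℂ) * z)

/-- The coefficient multiplier `[σ]_{n/k} = (σ-(n-1))_n / (σ+k-(n-1))_n`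
(Pochhammer / rising factorial). -/
noncomputable def poch (σ : ℝ) (n k : ℕ) : ℝ :=
  (ascPochhammer ℝ n).eval (σ - ((n : ℝ) - 1)) /
    (ascPochhammer ℝ n).eval (σ + (k : ℝ) - ((n : ℝ) - 1))

/-- Membership in `P_n^σ`. -/
def MemPn (σ : ℝ) (n : ℕ) (q : ℂ → ℂ) : Prop :=
  ∃ p : ℂ → ℂ, IsCara p ∧ ∀ z ∈ Metric.ball (0 : ℂ) 1, q z = sigmaIter σ n p z

/-- Membership in `B_n^σ(β)`: `f(z) = z (β + (1-β) p_{σ,n}(z))` for some Carathéodory `p`. -/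
def MemB (σ : ℝ) (n : ℕ) (β : ℝ) (f : ℂ → ℂ) : Prop :=
  ∃ p : ℂ → ℂ, IsCara p ∧ ∀ z ∈ Metric.ball (0 : ℂ) 1,
    f z = z * ((β : ℂ) + ((1 : ℂ) - β) * sigmaIter σ n p z)

section Auxiliary
open Metric Set

lemma asc_mono (n : ℕ) : ∀ {x y : ℝ}, 0 < x → x ≤ y →
    (ascPochhammer ℝ n).eval x ≤ (ascPochhammer ℝ n).eval y := by
  induction n with
  | zero => intro x y _ _; simp [ascPochhammer_zero]
  | succ m ih =>
    intro x y hx hxy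
    rw [ascPochhammer_succ_eval, ascPochhammer_succ_eval]
    have h1 : (0:ℝ) < (ascPochhammer ℝ m).eval x := ascPochhammer_pos m x hx
    have h2 := ih hx hxy
    have : (0:ℝ) < x + m := by positivity
    nlinarith [ascPochhammer_pos m y (lt_of_lt_of_le hx hxy)]

lemma poch_pos {σ : ℝ} {n : ℕ} (hσ : 0 < σ - ((n : ℝ) - 1)) (k : ℕ) : 0 < poch σ n k := by
  unfold poch
  apply div_pos (ascPochhammer_pos n _ (by linarith)) (ascPochhammer_pos n _ (by push_cast; linarith [Nat.cast_nonneg (α := ℝ) k]))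

lemma poch_le_one {σ : ℝ} {n : ℕ} (hσ : 0 < σ - ((n : ℝ) - 1)) (k : ℕ) : poch σ n k ≤ 1 := by
  unfold poch
  have hk : (0:ℝ) ≤ k := Nat.cast_nonneg k
  rw [div_le_one (ascPochhammer_pos n _ (by linarith))]
  exact asc_mono n (by linarith) (by linarith)

lemma summable_poch {σ : ℝ} {n : ℕ} (hσ : 0 < σ - ((n : ℝ) - 1)) {r : ℝ} (hr0 : 0 ≤ r)
    (hr : r < 1) : Summable (fun k : ℕ => poch σ n (k + 1) * (-r) ^ (k + 1)) := by
  apply Summable.of_norm_bounded (g := fun k : ℕ => r ^ (k + 1))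
  · exact (summable_geometric_of_lt_one hr0 hr).mul_left r |>.congr (fun k => by ring)
  · intro k
    rw [Real.norm_eq_abs, _root_.abs_mul, _root_.abs_pow, _root_.abs_neg, _root_.abs_of_nonneg hr0,
      _root_.abs_of_pos (poch_pos hσ _)]
    have := poch_le_one hσ (k+1)
    have : poch σ n (k+1) ≤ 1 := this
    nlinarith [pow_nonneg hr0 (k+1), pow_le_one₀ hr0 hr.le (n := k+1)]

lemma harnack {p : ℂ → ℂ} (hp : IsCara p) {z : ℂ} (hz : z ∈ Metric.ball (0:ℂ) 1) :
    (1 - ‖z‖) / (1 + ‖z‖) ≤ (p z).re := by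
  obtain ⟨hd, h0, hre⟩ := hp
  set f : ℂ → ℂ := fun w => (p w - 1) / (p w + 1) with hf
  have hne : ∀ w ∈ Metric.ball (0:ℂ) 1, p w + 1 ≠ 0 := by
    intro w hw h
    have : (p w + 1).re = 0 := by rw [h]; simp
    simp only [Complex.add_re, Complex.one_re] at this
    linarith [hre w hw]
  have hfd : DifferentiableOn ℂ f (Metric.ball 0 1) :=
    DifferentiableOn.div (hd.sub (differentiableOn_const 1)) (hd.add (differentiableOn_const 1)) hne
  have hmaps : Set.MapsTo f (Metric.ball 0 1) (Metric.ball (0:ℂ) 1) := by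
    intro w hw
    rw [Metric.mem_ball, dist_zero_right, norm_div, div_lt_one (by
      simpa using (norm_pos_iff).mpr (hne w hw))]
    have h1 : ‖p w - 1‖ ^ 2 < ‖p w + 1‖ ^ 2 := by
      simp only [Complex.sq_norm]
      simp only [Complex.normSq_apply, Complex.sub_re, Complex.sub_im, Complex.add_re,
        Complex.add_im, Complex.one_re, Complex.one_im]
      nlinarith [hre w hw]
    nlinarith [norm_nonneg (p w - 1), norm_nonneg (p w + 1)]
  have hf0 : f 0 = 0 := by simp [hf, h0]
  have hsch : ‖f z‖ ≤ ‖z‖ := by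
    apply Complex.norm_le_norm_of_mapsTo_ball_self hfd (hmaps.mono_right Metric.ball_subset_closedBall) hf0
    simpa using mem_ball_zero_iff.mp hz
  set r := ‖z‖ with hr
  have hr0 : 0 ≤ r := norm_nonneg z
  have hr1 : r < 1 := mem_ball_zero_iff.mp hz
  have key : ‖p z - 1‖ ≤ r * ‖p z + 1‖ := by
    have := hsch
    rw [hf] at this
    simp only at this
    rw [norm_div] at this
    calc ‖p z - 1‖ = ‖p z - 1‖ := rfl
      _ ≤ ‖z‖ * ‖p z + 1‖ := by
          rw [← div_le_iff₀ (by simpa using (norm_pos_iff).mpr (hne z hz))] at *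
          exact le_trans this le_rfl
      _ = r * ‖p z + 1‖ := rfl
  have hsq : ‖p z - 1‖ ^ 2 ≤ r ^ 2 * ‖p z + 1‖ ^ 2 := by
    nlinarith [norm_nonneg (p z - 1), norm_nonneg (p z + 1), mul_nonneg hr0 (norm_nonneg (p z + 1))]
  simp only [Complex.sq_norm] at hsq
  simp only [Complex.normSq_apply, Complex.sub_re, Complex.sub_im, Complex.add_re,
    Complex.add_im, Complex.one_re, Complex.one_im] at hsq
  have hu := hre z hz
  rw [div_le_iff₀ (by linarith)]
  by_contra hA
  push_neg at hA
  have hu1 : (p z).re < 1 := by nlinarith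
  have hB : (1 - r) * (p z).re < 1 + r := by nlinarith
  nlinarith [sq_nonneg ((p z).im),
    mul_pos (show 0 < (1 - r) - (p z).re * (1 + r) by linarith)
      (show 0 < (1 + r) - (1 - r) * (p z).re by linarith)]

lemma poch_succ {σ : ℝ} {m : ℕ} (hσ : (m:ℝ) < σ) (k : ℕ) :
    poch σ (m+1) k = (σ - m) / (σ + k - m) * poch σ m k := by
  have evals : ∀ x : ℝ, (ascPochhammer ℝ (m+1)).eval x
      = x * (ascPochhammer ℝ m).eval (x+1) := by
    intro x
    rw [ascPochhammer_succ_left]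
    simp [Polynomial.eval_mul, Polynomial.eval_comp]
  have hk : (0:ℝ) ≤ k := Nat.cast_nonneg k
  unfold poch
  rw [evals, evals]
  push_cast
  have a1 : σ - ((m:ℝ) + 1 - 1) + 1 = σ - ((m:ℝ) - 1) := by ring
  have a2 : σ + (k:ℝ) - ((m:ℝ) + 1 - 1) + 1 = σ + (k:ℝ) - ((m:ℝ) - 1) := by ring
  rw [a1, a2, div_mul_div_comm]
  congr 2 <;> ring

lemma hu_summable {r : ℝ} (h0 : 0 ≤ r) (h1 : r < 1) : Summable (fun k : ℕ => r ^ (k+1)) :=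
  ((summable_geometric_of_lt_one h0 h1).mul_left r).congr (fun k => by ring)

lemma tsum_u {r : ℝ} (h0 : 0 ≤ r) (h1 : r < 1) : ∑' k : ℕ, r ^ (k+1) = r * (1-r)⁻¹ := by
  rw [← tsum_geometric_of_lt_one h0 h1, ← tsum_mul_left]
  exact tsum_congr fun k => by ring

lemma term_bound {σ : ℝ} {m : ℕ} (hσ : 0 < σ - ((m:ℝ)-1)) {r s : ℝ} (h0 : 0 ≤ r) (hs0 : 0 ≤ s)
    (hs1 : s ≤ 1) (k : ℕ) : ‖poch σ m (k+1) * (-(s*r))^(k+1)‖ ≤ r^(k+1) := by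
  rw [Real.norm_eq_abs, _root_.abs_mul, _root_.abs_pow, _root_.abs_neg,
    _root_.abs_of_pos (poch_pos hσ _), _root_.abs_of_nonneg (mul_nonneg hs0 h0)]
  have h2 : s * r ≤ r := by nlinarith
  have h4 : (s*r)^(k+1) ≤ r^(k+1) := pow_le_pow_left₀ (mul_nonneg hs0 h0) h2 _
  nlinarith [pow_nonneg (mul_nonneg hs0 h0) (k+1), poch_pos hσ (k+1), poch_le_one hσ (k+1)]

lemma g_contOn {σ : ℝ} {m : ℕ} (hσ : 0 < σ - ((m:ℝ)-1)) {r : ℝ} (h0 : 0 ≤ r) (h1 : r < 1) :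
    ContinuousOn (fun s : ℝ => ∑' k : ℕ, poch σ m (k+1) * (-(s*r))^(k+1)) (Icc 0 1) := by
  refine (tendstoUniformlyOn_tsum (hu_summable h0 h1) ?_).continuousOn
    (Filter.Frequently.of_forall fun t => ?_)
  · exact fun k s hs => term_bound hσ h0 hs.1 hs.2 k
  · exact (continuous_finset_sum _ fun k _ => by continuity).continuousOn

lemma g_summable {σ : ℝ} {m : ℕ} (hσ : 0 < σ - ((m:ℝ)-1)) {r s : ℝ} (h0 : 0 ≤ r) (h1 : r < 1)
    (hs0 : 0 ≤ s) (hs1 : s ≤ 1) :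
    Summable (fun k : ℕ => poch σ m (k+1) * (-(s*r))^(k+1)) := by
  have : 0 ≤ s * r := mul_nonneg hs0 h0
  have : s * r < 1 := by nlinarith
  exact summable_poch hσ ‹0 ≤ s*r› this

lemma g_bound {σ : ℝ} {m : ℕ} (hσ : 0 < σ - ((m:ℝ)-1)) {r s : ℝ} (h0 : 0 ≤ r) (h1 : r < 1)
    (hs0 : 0 ≤ s) (hs1 : s ≤ 1) :
    |∑' k : ℕ, poch σ m (k+1) * (-(s*r))^(k+1)| ≤ r * (1-r)⁻¹ := by
  rw [← tsum_u h0 h1, ← Real.norm_eq_abs]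
  exact tsum_of_norm_bounded (hu_summable h0 h1).hasSum
    (fun k => term_bound hσ h0 hs0 hs1 k)

lemma integral_rpow_simple {q : ℝ} (hq : -1 < q) : ∫ s in (0:ℝ)..1, s ^ q = (q+1)⁻¹ := by
  rw [integral_rpow (Or.inl hq), Real.one_rpow, Real.zero_rpow (by linarith)]
  ring

lemma contOn_rpow_Ioc (e : ℝ) : ContinuousOn (fun s : ℝ => s ^ e) (Ioc (0:ℝ) 1) := by
  intro s hs
  exact (Real.continuousAt_rpow_const s e (Or.inl hs.1.ne')).continuousWithinAt

lemma intervalIntegrable_of_bound_rpow {E : Type*} [NormedAddCommGroup E] {f : ℝ → E}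
    {e C : ℝ} (he : -1 < e)
    (hmeas : ContinuousOn f (Ioc (0:ℝ) 1))
    (hb : ∀ s ∈ Ioc (0:ℝ) 1, ‖f s‖ ≤ C * s ^ e) :
    IntervalIntegrable f volume 0 1 := by
  rw [intervalIntegrable_iff_integrableOn_Ioc_of_le zero_le_one]
  have hbi : IntegrableOn (fun s : ℝ => C * s ^ e) (Ioc (0:ℝ) 1) := by
    have := (intervalIntegral.intervalIntegrable_rpow' (a := 0) (b := 1) he).const_mul C
    rwa [intervalIntegrable_iff_integrableOn_Ioc_of_le zero_le_one] at this
  refine Integrable.mono' hbi (hmeas.aestronglyMeasurable measurableSet_Ioc) ?_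
  filter_upwards [ae_restrict_mem measurableSet_Ioc] with s hs
  exact hb s hs

lemma poch_zero (σ : ℝ) (k : ℕ) : poch σ 0 k = 1 := by
  unfold poch
  simp [ascPochhammer_zero]

lemma base_val (σ : ℝ) {r : ℝ} (h0 : 0 ≤ r) (h1 : r < 1) :
    1 + 2 * ∑' k : ℕ, poch σ 0 (k+1) * (-r)^(k+1) = (1-r)/(1+r) := by
  have h : ∀ k : ℕ, poch σ 0 (k+1) * (-r)^(k+1) = (-r) * (-r)^k := fun k => by
    rw [poch_zero]; ring
  rw [tsum_congr h, tsum_mul_left, tsum_geometric_of_norm_lt_one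
    (by rw [norm_neg, Real.norm_eq_abs, _root_.abs_of_nonneg h0]; exact h1),
    show (1:ℝ) - (-r) = 1 + r by ring]
  have hne : (1:ℝ) + r ≠ 0 := by linarith
  field_simp
  ring

lemma int_gfun {σ : ℝ} {m : ℕ} (hσ : (m:ℝ) < σ) {r : ℝ} (h0 : 0 ≤ r) (h1 : r < 1) :
    IntervalIntegrable
      (fun s : ℝ => s ^ (σ - ((m:ℝ)+1)) * ∑' k : ℕ, poch σ m (k+1) * (-(s*r))^(k+1))
      volume 0 1 := by
  have hσ' : 0 < σ - ((m:ℝ)-1) := by linarith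
  have he : (-1:ℝ) < σ - ((m:ℝ)+1) := by linarith
  refine intervalIntegrable_of_bound_rpow (C := r * (1-r)⁻¹) he
    ((contOn_rpow_Ioc _).mul ((g_contOn hσ' h0 h1).mono Ioc_subset_Icc_self)) ?_
  intro s hs
  rw [Real.norm_eq_abs, _root_.abs_mul, _root_.abs_of_nonneg (Real.rpow_nonneg hs.1.le _),
    mul_comm (r * (1-r)⁻¹)]
  exact mul_le_mul_of_nonneg_left (g_bound hσ' h0 h1 hs.1.le hs.2) (Real.rpow_nonneg hs.1.le _)

lemma step_integral {σ : ℝ} {m : ℕ} (hσ : (m:ℝ) < σ) {r : ℝ} (h0 : 0 ≤ r) (h1 : r < 1) :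
    (σ - m) * ∫ s in (0:ℝ)..1, s ^ (σ - ((m:ℝ)+1)) *
        (1 + 2 * ∑' k : ℕ, poch σ m (k+1) * (-(s*r))^(k+1))
      = 1 + 2 * ∑' k : ℕ, poch σ (m+1) (k+1) * (-r) ^ (k+1) := by
  have hσ' : 0 < σ - ((m:ℝ)-1) := by linarith
  have he : (-1:ℝ) < σ - ((m:ℝ)+1) := by linarith
  set e := σ - ((m:ℝ)+1) with he_def
  set g : ℝ → ℝ := fun s => ∑' k : ℕ, poch σ m (k+1) * (-(s*r))^(k+1) with hg_def
  set F : ℕ → ℝ → ℝ := fun k s => s ^ e * (poch σ m (k+1) * (-(s*r))^(k+1)) with hF_def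
  have huIoc : Set.uIoc (0:ℝ) 1 = Ioc (0:ℝ) 1 := uIoc_of_le zero_le_one
  -- term-by-term integration
  have hsum : HasSum (fun k : ℕ => ∫ s in (0:ℝ)..1, F k s)
      (∫ s in (0:ℝ)..1, s ^ e * g s) := by
    apply intervalIntegral.hasSum_integral_of_dominated_convergence
      (bound := fun k s => r^(k+1) * s ^ e)
    · intro k
      rw [huIoc]
      exact (((contOn_rpow_Ioc e).mul (by continuity : Continuous fun s : ℝ =>
        poch σ m (k+1) * (-(s*r))^(k+1)).continuousOn)).aestronglyMeasurable measurableSet_Ioc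
    · intro k
      filter_upwards with s hs
      rw [huIoc] at hs
      rw [hF_def]
      simp only
      rw [Real.norm_eq_abs, _root_.abs_mul, _root_.abs_of_nonneg (Real.rpow_nonneg hs.1.le _),
        mul_comm (r^(k+1))]
      exact mul_le_mul_of_nonneg_left
        (by rw [← Real.norm_eq_abs]; exact term_bound hσ' h0 hs.1.le hs.2 k)
        (Real.rpow_nonneg hs.1.le _)
    · filter_upwards with s hs
      rw [huIoc] at hs
      exact (hu_summable h0 h1).mul_right _
    · have : (fun s : ℝ => ∑' k : ℕ, r^(k+1) * s ^ e)
          = fun s : ℝ => (r * (1-r)⁻¹) * s ^ e := by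
        funext s
        rw [tsum_mul_right, tsum_u h0 h1]
      rw [this]
      exact (intervalIntegral.intervalIntegrable_rpow' he).const_mul _
    · filter_upwards with s hs
      rw [huIoc] at hs
      exact ((g_summable hσ' h0 h1 hs.1.le hs.2).hasSum).mul_left _
  -- value of each term integral
  have hFk : ∀ k : ℕ, ∫ s in (0:ℝ)..1, F k s
      = poch σ m (k+1) * (-r)^(k+1) * (σ + ((k:ℝ)+1) - m)⁻¹ := by
    intro k
    have hq0 : (0:ℝ) < e + ((k:ℝ)+1) := by
      rw [he_def]; push_cast; linarith [Nat.cast_nonneg (α := ℝ) k]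
    have heq : EqOn (F k)
        (fun s => (poch σ m (k+1) * (-r)^(k+1)) * s ^ (e + ((k:ℝ)+1))) (uIcc (0:ℝ) 1) := by
      intro s hs
      rw [uIcc_of_le zero_le_one] at hs
      show s ^ e * (poch σ m (k+1) * (-(s*r))^(k+1))
        = poch σ m (k+1) * (-r)^(k+1) * s ^ (e + ((k:ℝ)+1))
      rcases eq_or_lt_of_le hs.1 with h | h
      · rw [← h, Real.zero_rpow hq0.ne']
        simp
      · have h2 : (-(s*r))^(k+1) = s^(k+1) * (-r)^(k+1) := by
          rw [show -(s*r) = s * (-r) by ring, mul_pow]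
        rw [h2, show e + ((k:ℝ)+1) = e + ((k+1:ℕ):ℝ) by push_cast; ring,
          Real.rpow_add h, Real.rpow_natCast]
        ring
    rw [intervalIntegral.integral_congr heq, intervalIntegral.integral_const_mul,
      integral_rpow_simple (by linarith)]
    congr 1
    rw [he_def]
    push_cast
    ring
  -- split the integral
  have II1 : IntervalIntegrable (fun s : ℝ => s ^ e) volume 0 1 :=
    intervalIntegral.intervalIntegrable_rpow' he
  have II2 : IntervalIntegrable (fun s : ℝ => s ^ e * g s) volume 0 1 := int_gfun hσ h0 h1
  have hsplit : (fun s : ℝ => s ^ e * (1 + 2 * g s))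
      = fun s => s ^ e + 2 * (s ^ e * g s) := funext fun s => by ring
  rw [show (∫ s in (0:ℝ)..1, s ^ e * (1 + 2 * g s))
      = ∫ s in (0:ℝ)..1, (s ^ e + 2 * (s ^ e * g s)) from by rw [← hsplit],
    intervalIntegral.integral_add II1 (II2.const_mul 2),
    intervalIntegral.integral_const_mul, integral_rpow_simple he, ← hsum.tsum_eq]
  have he1 : e + 1 = σ - m := by rw [he_def]; ring
  have hne : σ - (m:ℝ) ≠ 0 := by linarith
  rw [he1, mul_add, mul_inv_cancel₀ hne]
  congr 1
  rw [← mul_assoc, mul_comm (σ - (m:ℝ)) 2, mul_assoc, ← tsum_mul_left]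
  congr 1
  refine tsum_congr fun k => ?_
  rw [hFk k, poch_succ hσ (k+1)]
  push_cast
  rw [div_eq_mul_inv]
  ring

lemma norm_smul_mem {z : ℂ} (hz : z ∈ Metric.ball (0:ℂ) 1) {s : ℝ} (hs0 : 0 ≤ s) (hs1 : s ≤ 1) :
    ((s:ℂ) * z) ∈ Metric.ball (0:ℂ) 1 := by
  rw [mem_ball_zero_iff] at *
  rw [norm_mul, Complex.norm_real, Real.norm_eq_abs, _root_.abs_of_nonneg hs0]
  nlinarith [norm_nonneg z]

lemma norm_coe_mul (s : ℝ) (hs0 : 0 ≤ s) (z : ℂ) : ‖(s:ℂ) * z‖ = s * ‖z‖ := by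
  rw [norm_mul, Complex.norm_real, Real.norm_eq_abs, _root_.abs_of_nonneg hs0]

lemma main {σ : ℝ} {p : ℂ → ℂ} (hp : IsCara p) :
    ∀ n : ℕ, ((n:ℝ) - 1 < σ) →
      ContinuousOn (sigmaIter σ n p) (Metric.ball 0 1) ∧
      ∀ z ∈ Metric.ball (0:ℂ) 1,
        1 + 2 * ∑' k : ℕ, poch σ n (k+1) * (-(‖z‖)) ^ (k+1) ≤ (sigmaIter σ n p z).re := by
  intro n
  induction n with
  | zero =>
    intro _
    refine ⟨hp.1.continuousOn, fun z hz => ?_⟩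
    have h0 : 0 ≤ ‖z‖ := norm_nonneg z
    have h1 : ‖z‖ < 1 := mem_ball_zero_iff.mp hz
    rw [show sigmaIter σ 0 p = p from rfl, base_val σ h0 h1]
    exact harnack hp hz
  | succ m ih =>
    intro hm1
    have hm : (m:ℝ) < σ := by push_cast at hm1; linarith
    have hσ' : 0 < σ - ((m:ℝ)-1) := by linarith
    have he : (-1:ℝ) < σ - ((m:ℝ)+1) := by linarith
    set e := σ - ((m:ℝ)+1) with he_def
    obtain ⟨ihc, ihb⟩ := ih (by linarith)
    have huIoc : Set.uIoc (0:ℝ) 1 = Ioc (0:ℝ) 1 := uIoc_of_le zero_le_one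
    have hiter : ∀ z : ℂ, sigmaIter σ (m+1) p z
        = ((σ - (m:ℝ)):ℂ) * ∫ s in (0:ℝ)..1, ((s ^ e : ℝ) : ℂ) * sigmaIter σ m p ((s:ℂ)*z) :=
      fun z => rfl
    -- continuity in s, for z in the closed ball of radius ρ ≤ 1
    have hconts : ∀ z ∈ Metric.ball (0:ℂ) 1,
        ContinuousOn (fun s : ℝ => sigmaIter σ m p ((s:ℂ)*z)) (Icc 0 1) := by
      intro z hz
      refine ihc.comp ((Complex.continuous_ofReal.mul continuous_const).continuousOn) ?_
      intro s hs
      exact norm_smul_mem hz hs.1 hs.2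
    -- complex integrand integrable
    have hII : ∀ z ∈ Metric.ball (0:ℂ) 1,
        IntervalIntegrable (fun s : ℝ => ((s ^ e : ℝ) : ℂ) * sigmaIter σ m p ((s:ℂ)*z))
          volume 0 1 := by
      intro z hz
      obtain ⟨C, hC⟩ := (isCompact_Icc).exists_bound_of_continuousOn (hconts z hz)
      refine intervalIntegrable_of_bound_rpow (C := C) he ?_ ?_
      · exact (Complex.continuous_ofReal.comp_continuousOn (contOn_rpow_Ioc e)).mul
          ((hconts z hz).mono Ioc_subset_Icc_self)
      · intro s hs
        rw [norm_mul, Complex.norm_real, Real.norm_eq_abs,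
          _root_.abs_of_nonneg (Real.rpow_nonneg hs.1.le e), mul_comm C]
        exact mul_le_mul_of_nonneg_left (hC s ⟨hs.1.le, hs.2⟩) (Real.rpow_nonneg hs.1.le e)
    -- real part of the iterate
    have hre : ∀ z ∈ Metric.ball (0:ℂ) 1, (sigmaIter σ (m+1) p z).re
        = (σ - m) * ∫ s in (0:ℝ)..1, s ^ e * (sigmaIter σ m p ((s:ℂ)*z)).re := by
      intro z hz
      rw [hiter z, show ((σ:ℂ) - (((m:ℝ)):ℂ)) = (((σ - (m:ℝ)) : ℝ) : ℂ) by push_cast; ring,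
        Complex.re_ofReal_mul]
      congr 1
      have h' := ContinuousLinearMap.intervalIntegral_comp_comm Complex.reCLM (hII z hz)
      simp only [Complex.reCLM_apply] at h'
      rw [← h']
      exact intervalIntegral.integral_congr fun s _ => (Complex.re_ofReal_mul _ _)
    constructor
    · -- continuity of the (m+1)-st iterate
      intro z₀ hz₀
      have hz₀' : ‖z₀‖ < 1 := mem_ball_zero_iff.mp hz₀
      set ρ : ℝ := (1 + ‖z₀‖)/2 with hρ
      have hρ0 : 0 ≤ ρ := by positivity
      have hρ1 : ρ < 1 := by rw [hρ]; linarith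
      have hρz : ‖z₀‖ < ρ := by rw [hρ]; linarith
      obtain ⟨C, hC⟩ := (isCompact_closedBall (0:ℂ) ρ).exists_bound_of_continuousOn
        (ihc.mono (closedBall_subset_ball hρ1))
      have hCA : ContinuousAt
          (fun z => ∫ s in (0:ℝ)..1, ((s ^ e : ℝ) : ℂ) * sigmaIter σ m p ((s:ℂ)*z)) z₀ := by
        apply intervalIntegral.continuousAt_of_dominated_interval
          (bound := fun s => C * s ^ e)
        · filter_upwards [isOpen_ball.mem_nhds hz₀] with z hz
          rw [huIoc]
          exact ((Complex.continuous_ofReal.comp_continuousOn (contOn_rpow_Ioc e)).mul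
            ((hconts z hz).mono Ioc_subset_Icc_self)).aestronglyMeasurable measurableSet_Ioc
        · filter_upwards [isOpen_ball.mem_nhds (mem_ball_zero_iff.mpr hρz)] with z hz
          filter_upwards with s hs
          rw [huIoc] at hs
          rw [norm_mul, Complex.norm_real, Real.norm_eq_abs,
            _root_.abs_of_nonneg (Real.rpow_nonneg hs.1.le e), mul_comm C]
          refine mul_le_mul_of_nonneg_left (hC _ ?_) (Real.rpow_nonneg hs.1.le e)
          rw [mem_closedBall_zero_iff, norm_coe_mul s hs.1.le]
          have hz' : ‖z‖ < ρ := mem_ball_zero_iff.mp hz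
          nlinarith [norm_nonneg z, hs.1.le, hs.2]
        · exact (intervalIntegral.intervalIntegrable_rpow' he).const_mul C
        · filter_upwards with s hs
          rw [huIoc] at hs
          have hmem : ((s:ℂ) * z₀) ∈ Metric.ball (0:ℂ) 1 := norm_smul_mem hz₀ hs.1.le hs.2
          exact (continuousAt_const).mul
            ((ihc.continuousAt (isOpen_ball.mem_nhds hmem)).comp
              ((continuous_const.mul continuous_id).continuousAt :
                ContinuousAt (fun z : ℂ => (s:ℂ) * z) z₀))
      exact ((continuousAt_const.mul hCA).continuousWithinAt :
        ContinuousWithinAt (sigmaIter σ (m+1) p) _ z₀)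
    · -- the lower bound
      intro z hz
      set r : ℝ := ‖z‖ with hr
      have h0 : 0 ≤ r := norm_nonneg z
      have h1 : r < 1 := mem_ball_zero_iff.mp hz
      rw [hre z hz, ← step_integral hm h0 h1]
      have hmono : (∫ s in (0:ℝ)..1, s ^ e *
            (1 + 2 * ∑' k : ℕ, poch σ m (k+1) * (-(s*r))^(k+1)))
          ≤ ∫ s in (0:ℝ)..1, s ^ e * (sigmaIter σ m p ((s:ℂ)*z)).re := by
        apply intervalIntegral.integral_mono_on zero_le_one
        · have hsplit : (fun s : ℝ => s ^ e *
              (1 + 2 * ∑' k : ℕ, poch σ m (k+1) * (-(s*r))^(k+1)))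
              = fun s => s ^ e + 2 * (s ^ e * ∑' k : ℕ, poch σ m (k+1) * (-(s*r))^(k+1)) :=
            funext fun s => by ring
          rw [hsplit]
          exact (intervalIntegral.intervalIntegrable_rpow' he).add
            ((int_gfun hm h0 h1).const_mul 2)
        · obtain ⟨C, hC⟩ := (isCompact_Icc).exists_bound_of_continuousOn (hconts z hz)
          refine intervalIntegrable_of_bound_rpow (C := C) he ?_ ?_
          · exact (contOn_rpow_Ioc e).mul
              (Complex.continuous_re.comp_continuousOn
                ((hconts z hz).mono Ioc_subset_Icc_self))
          · intro s hs
            rw [Real.norm_eq_abs, _root_.abs_mul,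
              _root_.abs_of_nonneg (Real.rpow_nonneg hs.1.le e), mul_comm C]
            refine mul_le_mul_of_nonneg_left ?_ (Real.rpow_nonneg hs.1.le e)
            exact le_trans (Complex.abs_re_le_norm _) (hC s ⟨hs.1.le, hs.2⟩)
        · intro s hs
          refine mul_le_mul_of_nonneg_left ?_ (Real.rpow_nonneg hs.1 e)
          have := ihb ((s:ℂ)*z) (norm_smul_mem hz hs.1 hs.2)
          rwa [norm_coe_mul s hs.1 z, ← hr] at this
      have hσm : (0:ℝ) ≤ σ - m := by linarith
      calc (σ - (m:ℝ)) * ∫ s in (0:ℝ)..1, s ^ e *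
            (1 + 2 * ∑' k : ℕ, poch σ m (k+1) * (-(s*r))^(k+1))
          ≤ (σ - (m:ℝ)) * ∫ s in (0:ℝ)..1, s ^ e * (sigmaIter σ m p ((s:ℂ)*z)).re :=
            mul_le_mul_of_nonneg_left hmono hσm

end Auxiliary

/-- Lower real-part bound for members of `P_n^σ`:
`Re p_{σ,n}(z) ≥ 1 + 2 Σ_{k≥1} [σ]_{n/k} (-r)^k` for `|z| = r < 1`. -/
theorem stmt8 (σ : ℝ) (n : ℕ) (hσ : 0 < σ - ((n : ℝ) - 1))
    (q : ℂ → ℂ) (hq : MemPn σ n q)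
    (z : ℂ) (r : ℝ) (hz : ‖z‖ = r) (hr : r < 1) :
    1 + 2 * ∑' k : ℕ, poch σ n (k + 1) * (-r) ^ (k + 1) ≤ (q z).re := by
  obtain ⟨p, hp, heq⟩ := hq
  have hzb : z ∈ Metric.ball (0:ℂ) 1 := by
    rw [Metric.mem_ball, dist_zero_right, hz]; exact hr
  rw [heq z hzb]
  have h := (main (σ := σ) hp n (by linarith)).2 z hzb
  rwa [hz] at h
end

section
/- If f ∈ B_n^σ(β), then for |z| = r < 1: r + 2(1−β) Σ_{k=2}^∞ (−1)^{k−1} [σ]_{n/(k−1)} r^k ≤ |f(z)| ≤ r + 2(1−β) Σ_{k=2}^∞ [σ]_{n/(k−1)} r^k, where [σ]_{n/j} = (σ-(n-1))_n/(σ+j-(n-1))_n. -/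
open Complex MeasureTheory

section Aux
/-- product form coefficient -/
noncomputable def cc (σ : ℝ) (k j : ℕ) : ℝ :=
  ∏ m ∈ Finset.range k, (σ - m) / (σ - m + j)

lemma cc_succ (σ : ℝ) (k j : ℕ) :
    cc σ (k + 1) j = cc σ k j * ((σ - k) / (σ - k + j)) := Finset.prod_range_succ _ _

lemma cc_zero (σ : ℝ) (j : ℕ) : cc σ 0 j = 1 := by simp [cc]

lemma cc_pos {σ : ℝ} {k : ℕ} (h : (k : ℝ) - 1 < σ) (j : ℕ) : 0 < cc σ k j := by
  refine Finset.prod_pos fun m hm => ?_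
  have hm' : (m : ℝ) + 1 ≤ (k : ℝ) := by exact_mod_cast Finset.mem_range.1 hm
  have h1 : 0 < σ - m := by linarith
  have h2 : 0 < σ - m + j := by positivity
  exact div_pos h1 h2

lemma cc_le_one {σ : ℝ} {k : ℕ} (h : (k : ℝ) - 1 < σ) (j : ℕ) : cc σ k j ≤ 1 := by
  refine Finset.prod_le_one (fun m hm => ?_) (fun m hm => ?_)
  · have hm' : (m : ℝ) + 1 ≤ (k : ℝ) := by exact_mod_cast Finset.mem_range.1 hm
    have h1 : 0 < σ - m := by linarith
    positivity
  · have hm' : (m : ℝ) + 1 ≤ (k : ℝ) := by exact_mod_cast Finset.mem_range.1 hm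
    have h1 : 0 < σ - m := by linarith
    rw [div_le_one (by positivity)]
    simp [Nat.cast_nonneg]

lemma ascPochhammer_eval_prod (x : ℝ) (n : ℕ) :
    (ascPochhammer ℝ n).eval x = ∏ i ∈ Finset.range n, (x + i) := by
  induction n with
  | zero => simp
  | succ n ih => rw [ascPochhammer_succ_eval, ih, Finset.prod_range_succ]

lemma prod_reflect (τ : ℝ) (n : ℕ) :
    ∏ i ∈ Finset.range n, (τ - ((n : ℝ) - 1) + i) = ∏ m ∈ Finset.range n, (τ - m) := by
  rw [← Finset.prod_range_reflect (fun m => τ - (m : ℝ)) n]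
  refine Finset.prod_congr rfl fun i hi => ?_
  have hi' : i < n := Finset.mem_range.1 hi
  have h1 : n - 1 - i = n - (i + 1) := by omega
  rw [h1]
  have h2 : ((n - (i + 1) : ℕ) : ℝ) = (n : ℝ) - (i + 1) := by
    rw [Nat.cast_sub (by omega)]; push_cast; ring
  rw [h2]; ring

lemma poch_eq_cc (σ : ℝ) (n : ℕ) (j : ℕ) : poch σ n j = cc σ n j := by
  unfold poch cc
  rw [ascPochhammer_eval_prod, ascPochhammer_eval_prod, Finset.prod_div_distrib]
  rw [prod_reflect σ n]
  have : ∏ i ∈ Finset.range n, (σ + (j : ℝ) - ((n : ℝ) - 1) + i)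
      = ∏ m ∈ Finset.range n, (σ - m + j) := by
    rw [prod_reflect (σ + j) n]
    exact Finset.prod_congr rfl fun m _ => by ring
  rw [this]

noncomputable def phiU (σ : ℝ) (k : ℕ) (ε r : ℝ) : ℝ :=
  1 + 2 * ∑' j : ℕ, ε ^ (j + 1) * cc σ k (j + 1) * r ^ (j + 1)

lemma summable_geom_shift {x : ℝ} (h0 : 0 ≤ x) (h1 : x < 1) :
    Summable (fun j : ℕ => x ^ (j + 1)) := by
  simpa [pow_succ] using (summable_geometric_of_lt_one h0 h1).mul_right x

lemma summable_phi {σ : ℝ} {k : ℕ} (h : (k : ℝ) - 1 < σ) {ε r : ℝ}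
    (hε : |ε| ≤ 1) (hr : |r| < 1) :
    Summable (fun j : ℕ => ε ^ (j + 1) * cc σ k (j + 1) * r ^ (j + 1)) := by
  refine Summable.of_norm_bounded
    (summable_geom_shift (abs_nonneg r) hr) (fun j => ?_)
  have hcc := cc_pos h (j + 1)
  have hcc1 := cc_le_one h (j + 1)
  calc ‖ε ^ (j + 1) * cc σ k (j + 1) * r ^ (j + 1)‖
      = |ε| ^ (j + 1) * cc σ k (j + 1) * |r| ^ (j + 1) := by
        rw [Real.norm_eq_abs, abs_mul, abs_mul, _root_.abs_pow, _root_.abs_pow, abs_of_pos hcc]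
    _ ≤ 1 * 1 * |r| ^ (j + 1) := by
        refine mul_le_mul (mul_le_mul ?_ hcc1 hcc.le (by norm_num)) le_rfl
          (by positivity) (by norm_num)
        exact pow_le_one₀ (abs_nonneg ε) hε
    _ = |r| ^ (j + 1) := by ring

lemma abs_le_one_phi {ε : ℝ} (hε : ε = 1 ∨ ε = -1) : |ε| ≤ 1 := by
  rcases hε with h | h <;> simp [h]

lemma contOn_phi {σ : ℝ} {k : ℕ} (h : (k : ℝ) - 1 < σ) {ε b : ℝ}
    (hε : |ε| ≤ 1) (hb0 : 0 ≤ b) (hb : b < 1) :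
    ContinuousOn (fun x : ℝ => phiU σ k ε x) (Set.Icc (-b) b) := by
  unfold phiU
  refine continuousOn_const.add (continuousOn_const.mul ?_)
  refine continuousOn_tsum (fun j => (Continuous.continuousOn (by continuity)))
    (summable_geom_shift hb0 hb) (fun j x hx => ?_)
  have hxb : |x| ≤ b := abs_le.2 ⟨hx.1, hx.2⟩
  have hcc := cc_pos h (j + 1)
  have hcc1 := cc_le_one h (j + 1)
  calc ‖ε ^ (j + 1) * cc σ k (j + 1) * x ^ (j + 1)‖
      = |ε| ^ (j + 1) * cc σ k (j + 1) * |x| ^ (j + 1) := by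
        rw [Real.norm_eq_abs, abs_mul, abs_mul, _root_.abs_pow, _root_.abs_pow, abs_of_pos hcc]
    _ ≤ 1 * 1 * b ^ (j + 1) := by
        refine mul_le_mul (mul_le_mul (pow_le_one₀ (abs_nonneg ε) hε) hcc1 hcc.le
          (by norm_num)) (pow_le_pow_left₀ (abs_nonneg x) hxb _) (by positivity) (by norm_num)
    _ = b ^ (j + 1) := by ring

lemma phiU_zero (σ : ℝ) {ε r : ℝ} (h : |ε * r| < 1) :
    phiU σ 0 ε r = (1 + ε * r) / (1 - ε * r) := by
  have hne : 1 - ε * r ≠ 0 := by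
    rcases abs_lt.1 h with ⟨h1, h2⟩; intro hc; nlinarith
  unfold phiU
  have h1 : ∀ j : ℕ, ε ^ (j + 1) * cc σ 0 (j + 1) * r ^ (j + 1) = (ε * r) * (ε * r) ^ j := by
    intro j; simp [cc, mul_pow]; ring
  rw [tsum_congr h1, tsum_mul_left, tsum_geometric_of_norm_lt_one (by rw [Real.norm_eq_abs]; exact h)]
  field_simp
  ring

lemma integral_Ioc_rpow {b : ℝ} (hb : -1 < b) :
    ∫ s in Set.Ioc (0 : ℝ) 1, s ^ b = 1 / (b + 1) := by
  rw [← intervalIntegral.integral_of_le zero_le_one,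
    integral_rpow (Or.inl hb), Real.one_rpow, Real.zero_rpow (by linarith)]
  ring

lemma rpow_integrableOn {b : ℝ} (hb : -1 < b) :
    IntegrableOn (fun s : ℝ => s ^ b) (Set.Ioc (0 : ℝ) 1) := by
  have h := intervalIntegral.intervalIntegrable_rpow' (a := 0) (b := 1) hb
  rwa [intervalIntegrable_iff, Set.uIoc_of_le zero_le_one] at h

lemma step_eq {σ : ℝ} {k : ℕ} (hk : (k : ℝ) < σ) {ε r : ℝ}
    (hε : |ε| ≤ 1) (hr0 : 0 ≤ r) (hr : r < 1) :
    (σ - k) * ∫ s in Set.Ioc (0 : ℝ) 1, s ^ (σ - ((k : ℝ) + 1)) * phiU σ k ε (s * r)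
      = phiU σ (k + 1) ε r := by
  have hk1 : (k : ℝ) - 1 < σ := by linarith
  set a : ℝ := σ - ((k : ℝ) + 1) with ha_def
  have ha : -1 < a := by simp [ha_def]; linarith
  -- the coefficients
  set c : ℕ → ℝ := fun j => 2 * (ε ^ (j + 1) * cc σ k (j + 1) * r ^ (j + 1)) with hc_def
  have hcabs : ∀ j, |c j| ≤ 2 * r ^ (j + 1) := by
    intro j
    have h1 := cc_pos hk1 (j + 1)
    have h2 := cc_le_one hk1 (j + 1)
    rw [hc_def]
    rw [abs_mul, abs_mul, abs_mul, _root_.abs_pow, _root_.abs_pow, _root_.abs_of_pos h1,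
      _root_.abs_of_nonneg hr0]
    have : |ε| ^ (j + 1) ≤ 1 := pow_le_one₀ (abs_nonneg ε) hε
    have h2' : (0:ℝ) ≤ r ^ (j+1) := by positivity
    have : |ε| ^ (j + 1) * cc σ k (j + 1) ≤ 1 := by nlinarith
    have := mul_le_mul_of_nonneg_right this h2'
    calc |(2:ℝ)| * (|ε| ^ (j + 1) * cc σ k (j + 1) * r ^ (j + 1))
        = 2 * ((|ε| ^ (j + 1) * cc σ k (j + 1)) * r ^ (j + 1)) := by
          rw [show |(2:ℝ)| = 2 from _root_.abs_of_nonneg (by norm_num)]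
      _ ≤ 2 * (1 * r ^ (j + 1)) := by linarith
      _ = 2 * r ^ (j + 1) := by ring
  -- integrand rewrite on Ioc
  set F : ℕ → ℝ → ℝ := fun j s => c j * s ^ (a + (j + 1) : ℝ) with hF_def
  have hcong : Set.EqOn (fun s : ℝ => s ^ a * phiU σ k ε (s * r))
      (fun s : ℝ => s ^ a + ∑' j : ℕ, F j s) (Set.Ioc 0 1) := by
    intro s hs
    have hs0 : 0 < s := hs.1
    simp only [phiU, hF_def]
    rw [mul_add, mul_one, ← tsum_mul_left, ← tsum_mul_left]
    congr 1
    refine tsum_congr fun j => ?_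
    have : s ^ (a + (j + 1) : ℝ) = s ^ a * s ^ (j + 1) := by
      rw [Real.rpow_add hs0]
      congr 1
      rw [← Real.rpow_natCast s (j + 1)]
      push_cast; ring_nf
    rw [this, hc_def, mul_pow]
    ring
  rw [setIntegral_congr_fun measurableSet_Ioc hcong]
  -- integrability of individual terms
  have hFint : ∀ j : ℕ, Integrable (F j) (volume.restrict (Set.Ioc (0:ℝ) 1)) := by
    intro j
    exact (rpow_integrableOn (by push_cast; linarith : (-1:ℝ) < a + (j + 1))).const_mul _
  -- norms of integrals summable
  have hnorm_eq : ∀ j : ℕ, ∫ s in Set.Ioc (0:ℝ) 1, ‖F j s‖ = |c j| / (a + (j + 1) + 1) := by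
    intro j
    have : Set.EqOn (fun s : ℝ => ‖F j s‖) (fun s : ℝ => |c j| * s ^ (a + (j + 1) : ℝ))
        (Set.Ioc 0 1) := by
      intro s hs
      simp only [hF_def, Real.norm_eq_abs, abs_mul]
      rw [_root_.abs_of_nonneg (Real.rpow_nonneg hs.1.le _)]
    rw [setIntegral_congr_fun measurableSet_Ioc this, integral_const_mul,
      integral_Ioc_rpow (by push_cast; linarith)]
    ring
  have hsum : Summable fun j : ℕ => ∫ s in Set.Ioc (0:ℝ) 1, ‖F j s‖ := by
    refine Summable.of_nonneg_of_le (fun j => ?_) (fun j => ?_)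
      (((summable_geom_shift hr0 hr).mul_left (2 / (σ - k))))
    · rw [hnorm_eq j]
      have hpos : (0:ℝ) < a + (j + 1) + 1 := by rw [ha_def]; push_cast; linarith
      exact div_nonneg (abs_nonneg _) hpos.le
    · rw [hnorm_eq j]
      have hd : (0:ℝ) < σ - k := by linarith
      have hd2 : σ - k ≤ a + (j + 1) + 1 := by rw [ha_def]; push_cast; linarith
      calc |c j| / (a + (j + 1) + 1) ≤ (2 * r ^ (j + 1)) / (σ - k) :=
            div_le_div₀ (by positivity) (hcabs j) hd hd2
        _ = 2 / (σ - k) * r ^ (j + 1) := by ring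
  have hswap := integral_tsum_of_summable_integral_norm hFint hsum
  have hphi_cont : ContinuousOn (fun s : ℝ => phiU σ k ε (s * r)) (Set.uIcc (0:ℝ) 1) := by
    rw [Set.uIcc_of_le zero_le_one]
    refine (contOn_phi hk1 hε hr0 hr).comp (continuous_id.mul continuous_const).continuousOn ?_
    intro s hs
    refine Set.mem_Icc.2 ⟨?_, ?_⟩
    · show -r ≤ s * r
      nlinarith [hs.1, hs.2, hr0]
    · show s * r ≤ r
      nlinarith [hs.1, hs.2, hr0]
  have hint1 : IntegrableOn (fun s : ℝ => s ^ a * phiU σ k ε (s * r)) (Set.Ioc 0 1) := by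
    have h2 := (intervalIntegral.intervalIntegrable_rpow' (a := 0) (b := 1) ha).mul_continuousOn
      hphi_cont
    rwa [intervalIntegrable_iff, Set.uIoc_of_le zero_le_one] at h2
  have hint2 : Integrable (fun s => ∑' j, F j s) (volume.restrict (Set.Ioc (0:ℝ) 1)) := by
    refine (hint1.sub (rpow_integrableOn ha)).congr ?_
    refine (ae_restrict_iff' measurableSet_Ioc).2 (ae_of_all _ fun s hs => ?_)
    have h3 := hcong hs
    simp only [Pi.sub_apply]
    simp only at h3
    rw [h3]
    ring
  rw [integral_add (rpow_integrableOn ha) ?_]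
  · rw [← hswap, integral_Ioc_rpow ha]
    have hEval : ∀ j : ℕ, ∫ s in Set.Ioc (0:ℝ) 1, F j s = c j / (a + (j + 1) + 1) := by
      intro j
      simp only [hF_def]
      rw [integral_const_mul, integral_Ioc_rpow (by push_cast; linarith)]
      ring
    rw [tsum_congr hEval]
    -- now algebra
    have hd : (0:ℝ) < σ - k := by linarith
    simp only [phiU]
    rw [mul_add, ← tsum_mul_left]
    have hak : a + 1 = σ - (k:ℝ) := by rw [ha_def]; ring
    rw [mul_one_div, hak, div_self (ne_of_gt hd)]
    congr 1
    rw [← tsum_mul_left]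
    refine tsum_congr fun j => ?_
    rw [cc_succ]
    have hden : a + (j + 1) + 1 = σ - k + (j + 1) := by simp [ha_def]; ring
    rw [hden, hc_def]
    have hne : σ - k + ((j:ℝ) + 1) ≠ 0 := by positivity
    have hcast : ((j:ℝ) + 1) = ((j + 1 : ℕ) : ℝ) := by push_cast; ring
    rw [← hcast]
    field_simp
  · exact hint2

lemma cara_bound {p : ℂ → ℂ} (hp : IsCara p) {z : ℂ} (hz : z ∈ Metric.ball (0 : ℂ) 1) :
    (1 - ‖z‖) / (1 + ‖z‖) ≤ (p z).re ∧ ‖p z‖ ≤ (1 + ‖z‖) / (1 - ‖z‖) := by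
  obtain ⟨hd, h0, hre⟩ := hp
  have hne : ∀ ζ ∈ Metric.ball (0 : ℂ) 1, p ζ + 1 ≠ 0 := by
    intro ζ hζ h
    have h1 := congrArg Complex.re h
    simp only [Complex.add_re, Complex.one_re, Complex.zero_re] at h1
    linarith [hre ζ hζ]
  set w : ℂ → ℂ := fun ζ => (p ζ - 1) / (p ζ + 1) with hw_def
  have hdw : DifferentiableOn ℂ w (Metric.ball 0 1) :=
    (hd.sub (differentiableOn_const 1)).div (hd.add (differentiableOn_const 1)) hne
  have hw0 : w 0 = 0 := by
    simp [hw_def, h0]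
  have hwlt : ∀ ζ ∈ Metric.ball (0 : ℂ) 1, ‖w ζ‖ < 1 := by
    intro ζ hζ
    have hreζ := hre ζ hζ
    have hlt : ‖p ζ - 1‖ < ‖p ζ + 1‖ := by
      have h1 : ‖p ζ - 1‖ ^ 2 < ‖p ζ + 1‖ ^ 2 := by
        rw [← Complex.normSq_eq_norm_sq,
          ← Complex.normSq_eq_norm_sq]
        simp only [Complex.normSq_apply, Complex.sub_re, Complex.sub_im, Complex.add_re,
          Complex.add_im, Complex.one_re, Complex.one_im]
        nlinarith
      nlinarith [norm_nonneg (p ζ - 1), norm_nonneg (p ζ + 1)]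
    rw [hw_def]
    simp only [norm_div]
    rw [div_lt_one (lt_of_le_of_lt (norm_nonneg _) hlt)]
    exact hlt
  have hmaps : Set.MapsTo w (Metric.ball 0 1) (Metric.ball 0 1) := fun ζ hζ =>
    mem_ball_zero_iff.2 (hwlt ζ hζ)
  have hz1 : ‖z‖ < 1 := mem_ball_zero_iff.1 hz
  have hschwarz : ‖w z‖ ≤ ‖z‖ :=
    Complex.norm_le_norm_of_mapsTo_ball hdw (hmaps.mono_right Metric.ball_subset_closedBall) hw0 hz1
  set u : ℂ := w z with hu_def
  have hur : ‖u‖ ≤ ‖z‖ := by exact hschwarz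
  have hu1 : ‖u‖ < 1 := lt_of_le_of_lt hur hz1
  clear_value u
  have hne1 : (1 : ℂ) - u ≠ 0 := by
    intro h
    have hu : u = 1 := by linear_combination -h
    rw [hu] at hu1
    simp at hu1
  have hkey : p z * (1 - u) = 1 + u := by
    have h2 : u * (p z + 1) = p z - 1 := by
      rw [hu_def, hw_def]
      exact div_mul_cancel₀ _ (hne z hz)
    linear_combination -h2
  have hpz : p z = (1 + u) / (1 - u) := by
    rw [eq_div_iff hne1]; exact hkey
  constructor
  · -- real part lower bound
    have hre_eq : (p z).re = (1 - Complex.normSq u) / Complex.normSq (1 - u) := by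
      rw [hpz, Complex.div_re]
      simp only [Complex.add_re, Complex.add_im, Complex.sub_re, Complex.sub_im,
        Complex.one_re, Complex.one_im, Complex.normSq_apply]
      ring
    rw [hre_eq]
    have hnsq : Complex.normSq u = ‖u‖ ^ 2 := by
      rw [Complex.normSq_eq_norm_sq]

    have hnsq2 : Complex.normSq (1 - u) = ‖(1:ℂ) - u‖ ^ 2 := by
      rw [Complex.normSq_eq_norm_sq]

    have hb1 : ‖(1:ℂ) - u‖ ≤ 1 + ‖u‖ := by
      calc ‖(1:ℂ) - u‖ ≤ ‖(1:ℂ)‖ + ‖u‖ := norm_sub_le _ _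
        _ = 1 + ‖u‖ := by simp
    have hpos : 0 < Complex.normSq (1 - u) := Complex.normSq_pos.2 hne1
    rw [div_le_div_iff₀ (by positivity) hpos]
    have hzn : (0:ℝ) ≤ ‖z‖ := norm_nonneg z
    have hun : (0:ℝ) ≤ ‖u‖ := norm_nonneg u
    have hb2 : Complex.normSq (1 - u) ≤ (1 + ‖u‖)^2 := by
      rw [hnsq2]; nlinarith [norm_nonneg ((1:ℂ) - u)]
    rw [hnsq]
    nlinarith
  · rw [hpz, norm_div]
    have h1u : 1 - ‖u‖ ≤ ‖(1:ℂ) - u‖ := by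
      have := norm_sub_norm_le (1:ℂ) u
      simpa using this
    have hnum : ‖(1:ℂ) + u‖ ≤ 1 + ‖u‖ := by
      calc ‖(1:ℂ) + u‖ ≤ ‖(1:ℂ)‖ + ‖u‖ := norm_add_le _ _
        _ = 1 + ‖u‖ := by simp
    have hzn : (0:ℝ) ≤ ‖z‖ := norm_nonneg z
    have hun : (0:ℝ) ≤ ‖u‖ := norm_nonneg u
    calc ‖(1:ℂ) + u‖ / ‖(1:ℂ) - u‖ ≤ (1 + ‖u‖) / (1 - ‖u‖) :=
          div_le_div₀ (by positivity) hnum (by linarith) h1u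
      _ ≤ (1 + ‖z‖) / (1 - ‖z‖) := by
          rw [div_le_div_iff₀ (by linarith) (by linarith)]
          nlinarith

lemma mul_mem_ball {s : ℝ} (hs0 : 0 ≤ s) (hs1 : s ≤ 1) {z : ℂ}
    (hz : z ∈ Metric.ball (0 : ℂ) 1) : (s : ℂ) * z ∈ Metric.ball (0 : ℂ) 1 := by
  rw [mem_ball_zero_iff] at hz ⊢
  rw [norm_mul, Complex.norm_real, Real.norm_eq_abs, _root_.abs_of_nonneg hs0]
  calc s * ‖z‖ ≤ 1 * ‖z‖ := by nlinarith [norm_nonneg z]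
    _ < 1 := by simpa using hz

lemma norm_real_mul {s : ℝ} (hs0 : 0 ≤ s) (z : ℂ) : ‖(s : ℂ) * z‖ = s * ‖z‖ := by
  rw [norm_mul, Complex.norm_real, Real.norm_eq_abs, _root_.abs_of_nonneg hs0]

lemma integrand_integrable {σ : ℝ} {k : ℕ} (hk : (k : ℝ) < σ) {g : ℂ → ℂ}
    (hg : ContinuousOn g (Metric.ball 0 1)) {z : ℂ} (hz : z ∈ Metric.ball (0 : ℂ) 1) :
    IntervalIntegrable (fun s : ℝ => ((s ^ (σ - ((k : ℝ) + 1)) : ℝ) : ℂ) * g ((s : ℂ) * z))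
      volume 0 1 := by
  refine IntervalIntegrable.mul_continuousOn ?_ ?_
  · have h := intervalIntegral.intervalIntegrable_rpow' (a := 0) (b := 1)
      (show (-1:ℝ) < σ - ((k : ℝ) + 1) by linarith)
    rw [intervalIntegrable_iff] at h ⊢
    exact h.ofReal
  · rw [Set.uIcc_of_le zero_le_one]
    refine hg.comp ((Complex.continuous_ofReal.mul continuous_const).continuousOn) ?_
    intro s hs
    exact mul_mem_ball hs.1 hs.2 hz

lemma sigmaIter_contOn {σ : ℝ} {p : ℂ → ℂ} (hp : IsCara p) :
    ∀ k : ℕ, ((k : ℝ) - 1 < σ) → ContinuousOn (sigmaIter σ k p) (Metric.ball 0 1) := by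
  intro k
  induction k with
  | zero => intro _; exact hp.1.continuousOn
  | succ k ih =>
    intro hk
    have hk' : (k : ℝ) < σ := by push_cast at hk; linarith
    have ihc := ih (by linarith)
    intro x₀ hx₀
    have hx₀' : ‖x₀‖ < 1 := mem_ball_zero_iff.1 hx₀
    set t₀ : ℝ := (‖x₀‖ + 1) / 2 with ht₀_def
    have ht₀1 : t₀ < 1 := by rw [ht₀_def]; linarith
    have ht₀0 : 0 < t₀ := by rw [ht₀_def]; positivity
    have hx₀t : ‖x₀‖ < t₀ := by rw [ht₀_def]; linarith
    obtain ⟨C, hC⟩ := (isCompact_closedBall (0:ℂ) t₀).exists_bound_of_continuousOn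
      (ihc.mono (Metric.closedBall_subset_ball ht₀1))
    have hC0 : 0 ≤ C := le_trans (norm_nonneg _) (hC 0 (by simp [ht₀0.le]))
    show ContinuousWithinAt (fun z => ((σ - (k : ℝ)) : ℂ) *
      ∫ s in (0:ℝ)..1, ((s ^ (σ - ((k : ℝ) + 1)) : ℝ) : ℂ) * sigmaIter σ k p ((s : ℂ) * z))
      (Metric.ball 0 1) x₀
    refine continuousWithinAt_const.mul ?_
    refine intervalIntegral.continuousWithinAt_of_dominated_interval
      (bound := fun t => t ^ (σ - ((k : ℝ) + 1)) * C) ?_ ?_ ?_ ?_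
    · filter_upwards [self_mem_nhdsWithin] with z hz
      rw [Set.uIoc_of_le zero_le_one]
      refine AEStronglyMeasurable.mul ?_ ?_
      · refine (ContinuousOn.aestronglyMeasurable ?_ measurableSet_Ioc)
        refine Complex.continuous_ofReal.comp_continuousOn ?_
        intro t ht
        exact (Real.continuousAt_rpow_const t _ (Or.inl (ne_of_gt ht.1))).continuousWithinAt
      · refine (ContinuousOn.aestronglyMeasurable ?_ measurableSet_Ioc)
        refine ihc.comp ((Complex.continuous_ofReal.mul continuous_const).continuousOn) ?_
        intro t ht
        exact mul_mem_ball ht.1.le ht.2 hz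
    · have hball : Metric.ball (0:ℂ) t₀ ∈ nhdsWithin x₀ (Metric.ball (0:ℂ) 1) :=
        mem_nhdsWithin_of_mem_nhds (Metric.isOpen_ball.mem_nhds (mem_ball_zero_iff.2 hx₀t))
      filter_upwards [hball] with z hz
      refine ae_of_all _ fun t ht => ?_
      rw [Set.uIoc_of_le zero_le_one] at ht
      have ht0 : 0 < t := ht.1
      have ht1 : t ≤ 1 := ht.2
      rw [norm_mul, Complex.norm_real, Real.norm_eq_abs,
        _root_.abs_of_nonneg (Real.rpow_nonneg ht0.le _)]
      refine mul_le_mul_of_nonneg_left ?_ (Real.rpow_nonneg ht0.le _)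
      refine hC _ ?_
      rw [Metric.mem_closedBall, dist_zero_right, norm_real_mul ht0.le]
      have hzt : ‖z‖ < t₀ := mem_ball_zero_iff.1 hz
      nlinarith [norm_nonneg z]
    · exact (intervalIntegral.intervalIntegrable_rpow' (by linarith)).mul_const C
    · refine ae_of_all _ fun t ht => ?_
      rw [Set.uIoc_of_le zero_le_one] at ht
      refine continuousWithinAt_const.mul ?_
      have hmem : (t : ℂ) * x₀ ∈ Metric.ball (0:ℂ) 1 := mul_mem_ball ht.1.le ht.2 hx₀
      refine ContinuousWithinAt.comp (ihc _ hmem)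
        ((continuous_const.mul continuous_id).continuousWithinAt) ?_
      intro z hz
      exact mul_mem_ball ht.1.le ht.2 hz

lemma sigmaIter_bound {σ : ℝ} {p : ℂ → ℂ} (hp : IsCara p) :
    ∀ k : ℕ, ((k : ℝ) - 1 < σ) → ∀ z ∈ Metric.ball (0 : ℂ) 1,
      phiU σ k (-1) ‖z‖ ≤ (sigmaIter σ k p z).re ∧ ‖sigmaIter σ k p z‖ ≤ phiU σ k 1 ‖z‖ := by
  intro k
  induction k with
  | zero =>
    intro _ z hz
    have hz1 : ‖z‖ < 1 := mem_ball_zero_iff.1 hz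
    have hz0 : 0 ≤ ‖z‖ := norm_nonneg z
    have h1 : phiU σ 0 (-1) ‖z‖ = (1 - ‖z‖) / (1 + ‖z‖) := by
      rw [phiU_zero σ (by rw [abs_mul]; simp [_root_.abs_of_nonneg hz0]; exact hz1)]
      ring_nf
    have h2 : phiU σ 0 1 ‖z‖ = (1 + ‖z‖) / (1 - ‖z‖) := by
      rw [phiU_zero σ (by rw [abs_mul]; simp [_root_.abs_of_nonneg hz0]; exact hz1)]
      ring_nf
    rw [h1, h2]
    exact cara_bound hp hz
  | succ k ih =>
    intro hk z hz
    have hk' : (k : ℝ) < σ := by push_cast at hk; linarith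
    have hk'' : (k : ℝ) - 1 < σ := by linarith
    have hgc := sigmaIter_contOn hp k hk''
    set g := sigmaIter σ k p with hg_def
    set r := ‖z‖ with hr_def
    have hr1 : r < 1 := mem_ball_zero_iff.1 hz
    have hr0 : 0 ≤ r := norm_nonneg z
    set a : ℝ := σ - ((k : ℝ) + 1) with ha_def
    have ha : -1 < a := by rw [ha_def]; linarith
    have hσk : (0:ℝ) < σ - k := by linarith
    have hInt : IntervalIntegrable (fun s : ℝ => ((s ^ a : ℝ) : ℂ) * g ((s : ℂ) * z))
        volume 0 1 := integrand_integrable hk' hgc hz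
    have hInt' : IntegrableOn (fun s : ℝ => ((s ^ a : ℝ) : ℂ) * g ((s : ℂ) * z))
        (Set.Ioc 0 1) := by
      rw [intervalIntegrable_iff, Set.uIoc_of_le zero_le_one] at hInt
      exact hInt
    have hIH : ∀ s ∈ Set.Ioc (0:ℝ) 1,
        phiU σ k (-1) (s * r) ≤ (g ((s:ℂ) * z)).re ∧ ‖g ((s:ℂ) * z)‖ ≤ phiU σ k 1 (s * r) := by
      intro s hs
      have := ih hk'' ((s:ℂ) * z) (mul_mem_ball hs.1.le hs.2 hz)
      rwa [norm_real_mul hs.1.le, ← hr_def] at this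
    -- integrability of the comparison functions
    have hRint : ∀ ε : ℝ, |ε| ≤ 1 →
        IntegrableOn (fun s : ℝ => s ^ a * phiU σ k ε (s * r)) (Set.Ioc 0 1) := by
      intro ε hε
      have hcont : ContinuousOn (fun s : ℝ => phiU σ k ε (s * r)) (Set.uIcc (0:ℝ) 1) := by
        rw [Set.uIcc_of_le zero_le_one]
        refine (contOn_phi hk'' hε hr0 hr1).comp
          ((continuous_id.mul continuous_const).continuousOn) ?_
        intro s hs
        refine Set.mem_Icc.2 ⟨?_, ?_⟩
        · show -r ≤ s * r
          nlinarith [hs.1, hs.2]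
        · show s * r ≤ r
          nlinarith [hs.1, hs.2]
      have h2 := (intervalIntegral.intervalIntegrable_rpow' (a := 0) (b := 1) ha).mul_continuousOn
        hcont
      rwa [intervalIntegrable_iff, Set.uIoc_of_le zero_le_one] at h2
    have hIoc : (∫ s in (0:ℝ)..1, ((s ^ a : ℝ) : ℂ) * g ((s : ℂ) * z))
        = ∫ s in Set.Ioc (0:ℝ) 1, ((s ^ a : ℝ) : ℂ) * g ((s : ℂ) * z) :=
      intervalIntegral.integral_of_le zero_le_one
    have hunfold : sigmaIter σ (k+1) p z = (((σ - (k : ℝ)) : ℝ) : ℂ) *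
        ∫ s in (0:ℝ)..1, ((s ^ a : ℝ) : ℂ) * g ((s : ℂ) * z) := by
      show ((σ : ℂ) - ((k:ℝ) : ℂ)) * _ = _
      push_cast [ha_def]
      norm_num
      exact Or.inl rfl
    constructor
    · -- lower bound on real part
      rw [hunfold, hIoc, Complex.re_ofReal_mul]
      have hre_int : (∫ s in Set.Ioc (0:ℝ) 1, ((s ^ a : ℝ) : ℂ) * g ((s : ℂ) * z)).re
          = ∫ s in Set.Ioc (0:ℝ) 1, (((s ^ a : ℝ) : ℂ) * g ((s : ℂ) * z)).re := by
        simp only [← RCLike.re_to_complex]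
        rw [← integral_re hInt']
      rw [hre_int]
      rw [← step_eq hk' (by norm_num) hr0 hr1]
      refine mul_le_mul_of_nonneg_left ?_ hσk.le
      refine setIntegral_mono_on (hRint (-1) (by norm_num)) ?_ measurableSet_Ioc ?_
      · exact hInt'.re
      · intro s hs
        rw [Complex.re_ofReal_mul]
        exact mul_le_mul_of_nonneg_left (hIH s hs).1 (Real.rpow_nonneg hs.1.le _)
    · -- upper bound on norm
      rw [hunfold, hIoc, norm_mul]
      have hc : ‖(((σ - (k : ℝ)) : ℝ) : ℂ)‖ = σ - k := by
        rw [Complex.norm_real, Real.norm_eq_abs, _root_.abs_of_pos hσk]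
      rw [hc, ← step_eq hk' (by norm_num) hr0 hr1]
      refine mul_le_mul_of_nonneg_left ?_ hσk.le
      calc ‖∫ s in Set.Ioc (0:ℝ) 1, ((s ^ a : ℝ) : ℂ) * g ((s : ℂ) * z)‖
          ≤ ∫ s in Set.Ioc (0:ℝ) 1, ‖((s ^ a : ℝ) : ℂ) * g ((s : ℂ) * z)‖ :=
            norm_integral_le_integral_norm _
        _ ≤ ∫ s in Set.Ioc (0:ℝ) 1, s ^ a * phiU σ k 1 (s * r) := by
            refine setIntegral_mono_on hInt'.norm (hRint 1 (by norm_num)) measurableSet_Ioc ?_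
            intro s hs
            rw [norm_mul, Complex.norm_real, Real.norm_eq_abs,
              _root_.abs_of_nonneg (Real.rpow_nonneg hs.1.le _)]
            exact mul_le_mul_of_nonneg_left (hIH s hs).2 (Real.rpow_nonneg hs.1.le _)

end Aux

/-- Sharp growth bounds in `B_n^σ(β)`:
`r + 2(1-β) Σ_{k≥2} (-1)^{k-1}[σ]_{n/(k-1)} r^k ≤ |f(z)| ≤
 r + 2(1-β) Σ_{k≥2} [σ]_{n/(k-1)} r^k` for `|z| = r < 1`. -/
theorem stmt13 (σ : ℝ) (n : ℕ) (hσ : 0 < σ - ((n : ℝ) - 1))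
    (β : ℝ) (hβ0 : 0 ≤ β) (hβ1 : β < 1)
    (f : ℂ → ℂ) (hf : MemB σ n β f)
    (z : ℂ) (r : ℝ) (hz : ‖z‖ = r) (hr : r < 1) :
    r + 2 * (1 - β) * ∑' k : ℕ, (-1 : ℝ) ^ (k + 1) * poch σ n (k + 1) * r ^ (k + 2)
      ≤ ‖f z‖ ∧
    ‖f z‖ ≤ r + 2 * (1 - β) * ∑' k : ℕ, poch σ n (k + 1) * r ^ (k + 2) := by
  obtain ⟨p, hp, hfe⟩ := hf
  subst hz
  set r := ‖z‖ with hr_def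
  have hr0 : 0 ≤ r := norm_nonneg z
  have hz1 : z ∈ Metric.ball (0 : ℂ) 1 := mem_ball_zero_iff.2 hr
  have hσn : (n : ℝ) - 1 < σ := by linarith
  have hb := sigmaIter_bound hp n hσn z hz1
  set q := sigmaIter σ n p z with hq_def
  have hβ' : (0:ℝ) ≤ 1 - β := by linarith
  rw [hfe z hz1, norm_mul, ← hr_def]
  have halg : ∀ ε : ℝ, r * (β + (1 - β) * phiU σ n ε r)
      = r + 2 * (1 - β) * ∑' j : ℕ, ε ^ (j + 1) * cc σ n (j + 1) * r ^ (j + 2) := by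
    intro ε
    have hT : ∑' j : ℕ, ε ^ (j + 1) * cc σ n (j + 1) * r ^ (j + 2)
        = r * ∑' j : ℕ, ε ^ (j + 1) * cc σ n (j + 1) * r ^ (j + 1) := by
      rw [← tsum_mul_left]
      exact tsum_congr fun j => by ring
    rw [hT, phiU]
    ring
  have hre : ((β : ℂ) + ((1 : ℂ) - β) * q).re = β + (1 - β) * q.re := by
    have h1 : ((1 : ℂ) - (β:ℂ)) = (((1 - β : ℝ)) : ℂ) := by push_cast; ring
    rw [h1, Complex.add_re, Complex.re_ofReal_mul, Complex.ofReal_re]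
  have hnorm_le : ‖(β : ℂ) + ((1 : ℂ) - β) * q‖ ≤ β + (1 - β) * ‖q‖ := by
    have h1 : ((1 : ℂ) - (β:ℂ)) = (((1 - β : ℝ)) : ℂ) := by push_cast; ring
    calc ‖(β : ℂ) + ((1 : ℂ) - β) * q‖ ≤ ‖(β:ℂ)‖ + ‖((1 : ℂ) - β) * q‖ := norm_add_le _ _
      _ = β + (1 - β) * ‖q‖ := by
          rw [norm_mul, h1, Complex.norm_real, Complex.norm_real, Real.norm_eq_abs,
            Real.norm_eq_abs, _root_.abs_of_nonneg hβ0, _root_.abs_of_nonneg hβ']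
  constructor
  · -- lower bound
    have e1 : ∑' k : ℕ, (-1 : ℝ) ^ (k + 1) * poch σ n (k + 1) * r ^ (k + 2)
        = ∑' j : ℕ, (-1 : ℝ) ^ (j + 1) * cc σ n (j + 1) * r ^ (j + 2) :=
      tsum_congr fun j => by rw [poch_eq_cc]
    rw [e1, ← halg (-1)]
    calc r * (β + (1 - β) * phiU σ n (-1) r)
        ≤ r * (β + (1 - β) * q.re) := by
          refine mul_le_mul_of_nonneg_left ?_ hr0
          have := hb.1
          nlinarith
      _ = r * ((β : ℂ) + ((1 : ℂ) - β) * q).re := by rw [hre]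
      _ ≤ r * ‖(β : ℂ) + ((1 : ℂ) - β) * q‖ := by
          refine mul_le_mul_of_nonneg_left ?_ hr0
          exact Complex.re_le_norm _
  · -- upper bound
    have e1 : ∑' k : ℕ, poch σ n (k + 1) * r ^ (k + 2)
        = ∑' j : ℕ, (1 : ℝ) ^ (j + 1) * cc σ n (j + 1) * r ^ (j + 2) :=
      tsum_congr fun j => by rw [poch_eq_cc]; ring
    rw [e1, ← halg 1]
    calc r * ‖(β : ℂ) + ((1 : ℂ) - β) * q‖
        ≤ r * (β + (1 - β) * ‖q‖) := mul_le_mul_of_nonneg_left hnorm_le hr0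
      _ ≤ r * (β + (1 - β) * phiU σ n 1 r) := by
          refine mul_le_mul_of_nonneg_left ?_ hr0
          have := hb.2
          nlinarith
end
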